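/- Let Γ be an m×m real matrix that is asymptotically stable. Then the matrix 𝓘 := ∫₀^∞ exp(tΓ) · exp(tΓᵀ) dt is well defined (the integrand is integrable on [0,∞)) and satisfies Γ·𝓘 + 𝓘·Γᵀ = −I_m, where I_m is the m×m identity matrix. -/

import Mathlib

open MeasureTheory NormedSpace Matrix

section AuxLyap

open Filter

attribute [local instance] Matrix.linftyOpNormedRing Matrix.linftyOpNormedAlgebra

private lemma aux_vec_decay {m : ℕ} (A : Matrix (Fin m) (Fin m) ℂ) {ε : ℝ} (hε : 0 < ε)
    (hspec : ∀ μ ∈ spectrum ℂ A, μ.re ≤ -(2*ε)) (v : Fin m → ℂ) :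
    ∃ C : ℝ, 0 ≤ C ∧ ∀ t : ℝ, 0 ≤ t →
      ‖exp ((t:ℂ) • A) *ᵥ v‖ ≤ C * Real.exp (-ε * t) := by
  classical
  set S : Submodule ℂ (Fin m → ℂ) :=
    { carrier := {w | ∃ C : ℝ, 0 ≤ C ∧ ∀ t : ℝ, 0 ≤ t →
        ‖exp ((t:ℂ) • A) *ᵥ w‖ ≤ C * Real.exp (-ε * t)}
      zero_mem' := ⟨0, le_refl 0, fun t _ => by simp [Matrix.mulVec_zero]⟩
      add_mem' := by
        rintro x y ⟨C₁, hC₁, h₁⟩ ⟨C₂, hC₂, h₂⟩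
        refine ⟨C₁ + C₂, by positivity, fun t ht => ?_⟩
        rw [Matrix.mulVec_add, add_mul]
        exact (norm_add_le _ _).trans (add_le_add (h₁ t ht) (h₂ t ht))
      smul_mem' := by
        rintro c x ⟨C, hC, h⟩
        refine ⟨‖c‖ * C, by positivity, fun t ht => ?_⟩
        rw [Matrix.mulVec_smul, norm_smul, mul_assoc]
        exact mul_le_mul_of_nonneg_left (h t ht) (norm_nonneg c) } with hSdef
  suffices hv : v ∈ S from hv
  have htop := Module.End.iSup_maxGenEigenspace_eq_top (Matrix.toLinAlgEquiv' A)
  have hle : (⊤ : Submodule ℂ (Fin m → ℂ)) ≤ S := by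
    rw [← htop]
    refine iSup_le fun μ => ?_
    intro w hw
    rcases eq_or_ne w 0 with rfl | hw0
    · exact S.zero_mem
    obtain ⟨k, hk⟩ := (Module.End.mem_maxGenEigenspace _ _ _).mp hw
    -- μ is in the spectrum of A
    have hμ : μ ∈ spectrum ℂ A := by
      have hk0 : k ≠ 0 := by
        rintro rfl
        simp at hk
        exact hw0 hk
      rw [← AlgEquiv.spectrum_eq (Matrix.toLinAlgEquiv' (R := ℂ) (n := Fin m)) A,
        ← Module.End.hasEigenvalue_iff_mem_spectrum]
      refine Module.End.hasEigenvalue_of_hasGenEigenvalue (k := k)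
        ((Submodule.ne_bot_iff _).mpr ⟨w, ?_, hw0⟩)
      rw [Module.End.mem_genEigenspace_nat]
      exact hk
    have hre : μ.re ≤ -(2*ε) := hspec μ hμ
    -- translate to matrices
    set N : Matrix (Fin m) (Fin m) ℂ := A - μ • 1 with hNdef
    have hNk : N ^ k *ᵥ w = 0 := by
      have hEq : Matrix.toLinAlgEquiv' (N ^ k) =
          (Matrix.toLinAlgEquiv' A - μ • 1) ^ k := by
        rw [map_pow, map_sub, _root_.map_smul, _root_.map_one]
      calc N ^ k *ᵥ w = Matrix.toLinAlgEquiv' (N ^ k) w :=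
            (Matrix.toLinAlgEquiv'_apply _ _).symm
        _ = 0 := by rw [hEq]; exact hk
    -- splitting of the exponential
    have hsplit : ∀ t : ℝ, exp ((t:ℂ) • A) =
        Complex.exp ((t:ℂ) * μ) • exp ((t:ℂ) • N) := by
      intro t
      have h1 : (t:ℂ) • A = (t:ℂ) • N + ((t:ℂ) * μ) • (1 : Matrix (Fin m) (Fin m) ℂ) := by
        rw [hNdef, smul_sub, smul_smul, sub_add_cancel]
      have hcomm : Commute ((t:ℂ) • N) (((t:ℂ) * μ) • (1 : Matrix (Fin m) (Fin m) ℂ)) :=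
        (Commute.one_right _).smul_right _
      rw [h1, Matrix.exp_add_of_commute _ _ hcomm,
        show ((t:ℂ) * μ) • (1 : Matrix (Fin m) (Fin m) ℂ) =
          algebraMap ℂ (Matrix (Fin m) (Fin m) ℂ) ((t:ℂ) * μ) from
          (Algebra.algebraMap_eq_smul_one _).symm,
        show exp (algebraMap ℂ (Matrix (Fin m) (Fin m) ℂ) ((t:ℂ) * μ)) =
          algebraMap ℂ (Matrix (Fin m) (Fin m) ℂ) (exp ((t:ℂ) * μ)) from
          (map_exp (algebraMap ℂ (Matrix (Fin m) (Fin m) ℂ)) (continuous_algebraMap _ _) _).symm,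
        ← Complex.exp_eq_exp_ℂ, Algebra.algebraMap_eq_smul_one, mul_smul_comm, mul_one]
    -- finite sum formula
    have hexpN : ∀ t : ℝ, exp ((t:ℂ) • N) *ᵥ w =
        ∑ n ∈ Finset.range k, (((n.factorial : ℂ))⁻¹ * (t:ℂ) ^ n) • (N ^ n *ᵥ w) := by
      intro t
      let L : Matrix (Fin m) (Fin m) ℂ →ₗ[ℂ] (Fin m → ℂ) :=
        { toFun := fun M => M *ᵥ w
          map_add' := fun M₁ M₂ => Matrix.add_mulVec M₁ M₂ w
          map_smul' := fun c M => Matrix.smul_mulVec c M w }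
      let Lc : Matrix (Fin m) (Fin m) ℂ →L[ℂ] (Fin m → ℂ) := L.toContinuousLinearMap
      have hsum : Summable fun n : ℕ => ((n.factorial : ℂ))⁻¹ • ((t:ℂ) • N) ^ n :=
        expSeries_summable' ((t:ℂ) • N)
      have h1 : exp ((t:ℂ) • N) *ᵥ w = Lc (exp ((t:ℂ) • N)) := rfl
      rw [h1, exp_eq_tsum ℂ, Lc.map_tsum hsum]
      have h2 : ∀ n : ℕ, Lc (((n.factorial : ℂ))⁻¹ • ((t:ℂ) • N) ^ n) =
          (((n.factorial : ℂ))⁻¹ * (t:ℂ) ^ n) • (N ^ n *ᵥ w) := by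
        intro n
        rw [_root_.map_smul, smul_pow, _root_.map_smul]
        show ((n.factorial : ℂ))⁻¹ • ((t:ℂ)^n • (N ^ n *ᵥ w)) = _
        rw [smul_smul]
      rw [tsum_congr h2]
      refine tsum_eq_sum ?_
      intro n hn
      have hkn : k ≤ n := by simpa using Finset.mem_range.not.mp hn
      have hz : N ^ n *ᵥ w = 0 := by
        rw [← Nat.sub_add_cancel hkn, pow_add, ← Matrix.mulVec_mulVec, hNk, Matrix.mulVec_zero]
      rw [hz, smul_zero]
    -- the bound
    refine ⟨∑ n ∈ Finset.range k, ε⁻¹ ^ n * ‖N ^ n *ᵥ w‖, by positivity, fun t ht => ?_⟩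
    rw [hsplit t, Matrix.smul_mulVec, norm_smul, hexpN t]
    have hnorm1 : ‖Complex.exp ((t:ℂ) * μ)‖ = Real.exp (t * μ.re) := by
      rw [Complex.norm_exp]
      congr 1
      simp [Complex.mul_re]
    have hbound : ‖∑ n ∈ Finset.range k, (((n.factorial : ℂ))⁻¹ * (t:ℂ) ^ n) • (N ^ n *ᵥ w)‖ ≤
        Real.exp (ε * t) * ∑ n ∈ Finset.range k, ε⁻¹ ^ n * ‖N ^ n *ᵥ w‖ := by
      refine (norm_sum_le _ _).trans ?_
      rw [Finset.mul_sum]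
      refine Finset.sum_le_sum fun n _ => ?_
      rw [norm_smul, norm_mul, norm_inv, norm_pow]
      have h1 : ‖((n.factorial : ℕ) : ℂ)‖ = (n.factorial : ℝ) := by simp
      have h2 : ‖(t : ℂ)‖ = t := by
        rw [Complex.norm_real, Real.norm_eq_abs, abs_of_nonneg ht]
      rw [h1, h2]
      have key : (n.factorial : ℝ)⁻¹ * t ^ n ≤ Real.exp (ε * t) * ε⁻¹ ^ n := by
        have h3 : (ε * t) ^ n / (n.factorial : ℝ) ≤ Real.exp (ε * t) := by
          calc (ε * t) ^ n / (n.factorial : ℝ)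
              ≤ ∑ i ∈ Finset.range (n + 1), (ε * t) ^ i / (i.factorial : ℝ) := by
                refine Finset.single_le_sum (f := fun i => (ε * t) ^ i / (i.factorial : ℝ))
                  (fun i _ => by positivity) ?_
                exact Finset.self_mem_range_succ n
            _ ≤ Real.exp (ε * t) := Real.sum_le_exp_of_nonneg (by positivity) _
        have h4 : (n.factorial : ℝ)⁻¹ * t ^ n =
            ((ε * t) ^ n / (n.factorial : ℝ)) * ε⁻¹ ^ n := by
          field_simp [mul_pow]
          rw [← mul_pow, mul_comm ε t, mul_assoc, mul_one_div_cancel hε.ne', mul_one]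
        rw [h4]
        exact mul_le_mul_of_nonneg_right h3 (by positivity)
      calc (n.factorial : ℝ)⁻¹ * t ^ n * ‖N ^ n *ᵥ w‖
          ≤ (Real.exp (ε * t) * ε⁻¹ ^ n) * ‖N ^ n *ᵥ w‖ :=
            mul_le_mul_of_nonneg_right key (norm_nonneg _)
        _ = Real.exp (ε * t) * (ε⁻¹ ^ n * ‖N ^ n *ᵥ w‖) := by ring
    calc ‖Complex.exp ((t:ℂ) * μ)‖ * ‖∑ n ∈ Finset.range k,
          (((n.factorial : ℂ))⁻¹ * (t:ℂ) ^ n) • (N ^ n *ᵥ w)‖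
        ≤ Real.exp (t * μ.re) *
            (Real.exp (ε * t) * ∑ n ∈ Finset.range k, ε⁻¹ ^ n * ‖N ^ n *ᵥ w‖) := by
          rw [hnorm1]
          exact mul_le_mul_of_nonneg_left hbound (Real.exp_nonneg _)
      _ ≤ Real.exp (-(2*ε) * t) *
            (Real.exp (ε * t) * ∑ n ∈ Finset.range k, ε⁻¹ ^ n * ‖N ^ n *ᵥ w‖) := by
          refine mul_le_mul_of_nonneg_right (Real.exp_le_exp.mpr ?_) ?_
          · calc t * μ.re ≤ t * (-(2*ε)) := mul_le_mul_of_nonneg_left hre ht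
              _ = -(2*ε) * t := by ring
          · positivity
      _ = (∑ n ∈ Finset.range k, ε⁻¹ ^ n * ‖N ^ n *ᵥ w‖) * Real.exp (-ε * t) := by
          rw [← mul_assoc, ← Real.exp_add,
            show -(2*ε) * t + ε * t = -ε * t by ring]
          ring
  exact hle Submodule.mem_top

private lemma aux_decay {m : ℕ} (Γ : Matrix (Fin m) (Fin m) ℝ)
    (hΓ : ∀ μ ∈ spectrum ℂ (Γ.map Complex.ofReal), μ.re < 0) :
    ∃ ε C : ℝ, 0 < ε ∧ 0 ≤ C ∧ ∀ t : ℝ, 0 ≤ t → ∀ i j,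
      |exp (t • Γ) i j| ≤ C * Real.exp (-ε * t) := by
  classical
  rcases Nat.eq_zero_or_pos m with rfl | hm
  · exact ⟨1, 0, one_pos, le_refl 0, fun t ht i => i.elim0⟩
  haveI : Nonempty (Fin m) := ⟨⟨0, hm⟩⟩
  set A := Γ.map Complex.ofReal with hA
  haveI : Nontrivial (Matrix (Fin m) (Fin m) ℂ) := by
    refine ⟨0, 1, fun h => ?_⟩
    have := congrFun (congrFun h ⟨0, hm⟩) ⟨0, hm⟩
    rw [Matrix.one_apply_eq] at this
    exact zero_ne_one (α := ℂ) this
  obtain ⟨μ₀, hμ₀, hmax⟩ := (spectrum.isCompact (𝕜 := ℂ) A).exists_isMaxOn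
    (spectrum.nonempty A) (Complex.continuous_re.continuousOn)
  have hμ₀neg : μ₀.re < 0 := hΓ μ₀ hμ₀
  set ε := -μ₀.re / 2 with hεdef
  have hε : 0 < ε := by rw [hεdef]; linarith
  have hspec : ∀ μ ∈ spectrum ℂ A, μ.re ≤ -(2*ε) := by
    intro μ hμ
    have h := hmax hμ
    simp only [Set.mem_setOf_eq] at h
    calc μ.re ≤ μ₀.re := h
      _ = -(2*ε) := by rw [hεdef]; ring
  choose C hC0 hC using fun j : Fin m => aux_vec_decay A hε hspec (Pi.single j 1)
  refine ⟨ε, ∑ j, C j, hε, Finset.sum_nonneg fun j _ => hC0 j, fun t ht i j => ?_⟩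
  have hf : Continuous fun M : Matrix (Fin m) (Fin m) ℝ =>
      (Complex.ofRealHom.mapMatrix : Matrix (Fin m) (Fin m) ℝ →+* Matrix (Fin m) (Fin m) ℂ) M :=
    continuous_id.matrix_map Complex.continuous_ofReal
  have hmapexp : (exp (t • Γ)).map Complex.ofReal = exp ((t:ℂ) • A) := by
    have h1 := map_exp
      (Complex.ofRealHom.mapMatrix : Matrix (Fin m) (Fin m) ℝ →+* Matrix (Fin m) (Fin m) ℂ)
      hf (t • Γ)
    have h2 : (Complex.ofRealHom.mapMatrix : Matrix (Fin m) (Fin m) ℝ →+*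
        Matrix (Fin m) (Fin m) ℂ) (t • Γ) = (t:ℂ) • A := by
      ext i j
      simp [hA, Matrix.map_apply, RingHom.mapMatrix_apply, Matrix.smul_apply, Complex.ofReal_mul]
    have h3 : (exp : Matrix (Fin m) (Fin m) ℂ → Matrix (Fin m) (Fin m) ℂ) = exp :=
      rfl
    calc (exp (t • Γ)).map Complex.ofReal
        = (Complex.ofRealHom.mapMatrix : Matrix (Fin m) (Fin m) ℝ →+*
            Matrix (Fin m) (Fin m) ℂ) (exp (t • Γ)) := rfl
      _ = exp ((t:ℂ) • A) := by rw [← h2]; exact h1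
      _ = exp ((t:ℂ) • A) := by rw [h3]
  have hentry : ((|exp (t • Γ) i j| : ℝ)) = ‖exp ((t:ℂ) • A) i j‖ := by
    rw [← hmapexp]
    simp [Matrix.map_apply, Complex.norm_real, Real.norm_eq_abs]
  rw [hentry]
  have hcol : exp ((t:ℂ) • A) i j = (exp ((t:ℂ) • A) *ᵥ Pi.single j 1) i := by
    rw [Matrix.mulVec_single]
    simp
  rw [hcol]
  calc ‖(exp ((t:ℂ) • A) *ᵥ Pi.single j 1) i‖
      ≤ ‖exp ((t:ℂ) • A) *ᵥ Pi.single j 1‖ := norm_le_pi_norm _ i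
    _ ≤ C j * Real.exp (-ε * t) := hC j t ht
    _ ≤ (∑ j', C j') * Real.exp (-ε * t) := by
        refine mul_le_mul_of_nonneg_right ?_ (Real.exp_nonneg _)
        exact Finset.single_le_sum (fun j' _ => hC0 j') (Finset.mem_univ j)

private lemma aux_slope {m : ℕ} (Γ : Matrix (Fin m) (Fin m) ℝ) (t₀ : ℝ) :
    Filter.Tendsto (slope (fun t : ℝ => exp (t • Γ) * exp (t • Γᵀ)) t₀)
      (nhdsWithin t₀ {t₀}ᶜ)
      (nhds (Γ * (exp (t₀ • Γ) * exp (t₀ • Γᵀ)) +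
        (exp (t₀ • Γ) * exp (t₀ • Γᵀ)) * Γᵀ)) := by
  have h1 := hasDerivAt_exp_smul_const' Γ t₀
  have h2 := hasDerivAt_exp_smul_const Γᵀ t₀
  have h3 := h1.mul h2
  refine hasDerivAt_iff_tendsto_slope.mp ?_
  convert h3 using 1
  · rfl
  · rfl
  simp only [mul_assoc, mul_add, add_mul]
  rfl

end AuxLyap

attribute [local instance] Matrix.normedAddCommGroup Matrix.normedSpace

instance Matrix.realContinuousENorm {m n : Type*} [Fintype m] [Fintype n] :
    ContinuousENorm (Matrix m n ℝ) :=
  SeminormedAddGroup.toContinuousENorm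

/-- A square real matrix is asymptotically stable if every eigenvalue (over `ℂ`) has
strictly negative real part. -/
def IsAsymptoticallyStable {m : ℕ} (Γ : Matrix (Fin m) (Fin m) ℝ) : Prop :=
  ∀ μ ∈ spectrum ℂ (Γ.map Complex.ofReal), μ.re < 0

/-- For `Γ` asymptotically stable, the matrix `𝓘 = ∫₀^∞ exp(tΓ) exp(tΓᵀ) dt` is well
defined (the integrand is integrable on `[0,∞)`) and satisfies `Γ 𝓘 + 𝓘 Γᵀ = −I`. -/
theorem integral_exp_mul_exp_transpose {m : ℕ} (Γ : Matrix (Fin m) (Fin m) ℝ)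
    (hΓ : IsAsymptoticallyStable Γ) :
    IntegrableOn (fun t : ℝ => exp (t • Γ) * exp (t • Γᵀ)) (Set.Ici 0) ∧
      Γ * (∫ t in Set.Ici (0 : ℝ), exp (t • Γ) * exp (t • Γᵀ)) +
        (∫ t in Set.Ici (0 : ℝ), exp (t • Γ) * exp (t • Γᵀ)) * Γᵀ = -1 := by
  classical
  obtain ⟨ε, C, hε, hC, hbd⟩ := aux_decay Γ hΓ
  set F : ℝ → Matrix (Fin m) (Fin m) ℝ := fun t => exp (t • Γ) * exp (t • Γᵀ) with hF
  -- entrywise bound for the transposed exponential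
  have hbdT : ∀ t : ℝ, 0 ≤ t → ∀ i j, |exp (t • Γᵀ) i j| ≤ C * Real.exp (-ε * t) := by
    intro t ht i j
    have h : exp (t • Γᵀ) = (exp (t • Γ))ᵀ := by
      rw [← Matrix.transpose_smul, Matrix.exp_transpose]
    rw [h]
    exact hbd t ht j i
  -- norm bound for F
  have hFbd : ∀ t : ℝ, 0 ≤ t → ‖F t‖ ≤ (m * C^2) * Real.exp (-(2*ε) * t) := by
    intro t ht
    have hrhs : (0:ℝ) ≤ (m * C^2) * Real.exp (-(2*ε) * t) := by positivity
    rw [Matrix.norm_le_iff hrhs]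
    intro i j
    rw [Real.norm_eq_abs]
    have : F t i j = ∑ l, exp (t • Γ) i l * exp (t • Γᵀ) l j := Matrix.mul_apply
    rw [this]
    calc |∑ l, exp (t • Γ) i l * exp (t • Γᵀ) l j|
        ≤ ∑ l, |exp (t • Γ) i l * exp (t • Γᵀ) l j| := Finset.abs_sum_le_sum_abs _ _
      _ ≤ ∑ _l : Fin m, (C * Real.exp (-ε * t)) * (C * Real.exp (-ε * t)) := by
          refine Finset.sum_le_sum fun l _ => ?_
          rw [abs_mul]
          exact mul_le_mul (hbd t ht i l) (hbdT t ht l j) (abs_nonneg _)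
            (by positivity)
      _ = (m * C^2) * Real.exp (-(2*ε) * t) := by
          rw [Finset.sum_const, Finset.card_univ, Fintype.card_fin, nsmul_eq_mul,
            show C * Real.exp (-ε * t) * (C * Real.exp (-ε * t)) =
              C^2 * (Real.exp (-ε * t) * Real.exp (-ε * t)) by ring,
            ← Real.exp_add, show -ε * t + -ε * t = -(2*ε) * t by ring]
          ring
  -- derivative of F
  have hder : ∀ t : ℝ, HasDerivAt F (Γ * F t + F t * Γᵀ) t := fun t =>
    hasDerivAt_iff_tendsto_slope.mpr (aux_slope Γ t)
  have hcont : Continuous F := continuous_iff_continuousAt.mpr fun t => (hder t).continuousAt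
  -- integrability of F
  have hg0 : IntegrableOn (fun t : ℝ => Real.exp (-(2*ε) * t)) (Set.Ici 0) :=
    (integrableOn_Ici_iff_integrableOn_Ioi).mpr (exp_neg_integrableOn_Ioi 0 (by positivity))
  have hg : IntegrableOn (fun t : ℝ => (m * C^2) * Real.exp (-(2*ε) * t)) (Set.Ici 0) :=
    hg0.const_mul _
  have hIntF : IntegrableOn F (Set.Ici 0) := by
    haveI : TopologicalSpace.PseudoMetrizableSpace (Matrix (Fin m) (Fin m) ℝ) :=
      inferInstanceAs (TopologicalSpace.PseudoMetrizableSpace (Fin m → Fin m → ℝ))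
    refine hg.mono' hcont.aestronglyMeasurable.restrict ?_
    filter_upwards [ae_restrict_mem measurableSet_Ici] with t ht
    exact hFbd t ht
  refine ⟨hIntF, ?_⟩
  -- continuous linear maps given by left/right multiplication
  let L : Matrix (Fin m) (Fin m) ℝ →L[ℝ] Matrix (Fin m) (Fin m) ℝ :=
    (LinearMap.mulLeft ℝ Γ).toContinuousLinearMap
  let R : Matrix (Fin m) (Fin m) ℝ →L[ℝ] Matrix (Fin m) (Fin m) ℝ :=
    (LinearMap.mulRight ℝ Γᵀ).toContinuousLinearMap
  have hL : ∀ M, L M = Γ * M := fun M => rfl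
  have hR : ∀ M, R M = M * Γᵀ := fun M => rfl
  have hIntL : IntegrableOn (fun t => Γ * F t) (Set.Ici 0) := L.integrable_comp hIntF
  have hIntR : IntegrableOn (fun t => F t * Γᵀ) (Set.Ici 0) := R.integrable_comp hIntF
  have hIntD : IntegrableOn (fun t => Γ * F t + F t * Γᵀ) (Set.Ici 0) := (L + R).integrable_comp hIntF
  -- the interval integrals converge to the improper integral
  have hIoi : Filter.Tendsto (fun T : ℝ => ∫ t in (0:ℝ)..T, (Γ * F t + F t * Γᵀ)) Filter.atTop
      (nhds (∫ t in Set.Ioi (0:ℝ), (Γ * F t + F t * Γᵀ))) :=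
    intervalIntegral_tendsto_integral_Ioi 0
      (((integrableOn_Ici_iff_integrableOn_Ioi).mp hIntD)) Filter.tendsto_id
  have hIciIoi : ∫ t in Set.Ici (0:ℝ), (Γ * F t + F t * Γᵀ) =
      ∫ t in Set.Ioi (0:ℝ), (Γ * F t + F t * Γᵀ) := integral_Ici_eq_integral_Ioi
  -- fundamental theorem of calculus
  have heq : ∀ T : ℝ, ∫ t in (0:ℝ)..T, (Γ * F t + F t * Γᵀ) = F T - 1 := by
    intro T
    have h := intervalIntegral.integral_eq_sub_of_hasDerivAt (fun t _ => hder t)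
      (((continuous_const.matrix_mul hcont).add (hcont.matrix_mul continuous_const)).intervalIntegrable 0 T)
    rw [h]
    have hF0 : F 0 = 1 := by
      rw [hF]
      simp only [zero_smul, exp_zero, one_mul]
    rw [hF0]
  -- limit of F T - 1
  have hFlim : Filter.Tendsto F Filter.atTop (nhds 0) := by
    have hnorm : ∀ᶠ T in Filter.atTop, ‖F T‖ ≤ (m * C^2) * Real.exp (-(2*ε) * T) :=
      (Filter.eventually_ge_atTop 0).mono fun T hT => hFbd T hT
    have hto : Filter.Tendsto (fun T : ℝ => (m * C^2) * Real.exp (-(2*ε) * T))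
        Filter.atTop (nhds 0) := by
      have h1 : Filter.Tendsto (fun T : ℝ => (2*ε) * T) Filter.atTop Filter.atTop :=
        Filter.Tendsto.const_mul_atTop (by positivity) Filter.tendsto_id
      have h2 : Filter.Tendsto (fun T : ℝ => Real.exp (-(2*ε) * T)) Filter.atTop (nhds 0) := by
        have := Real.tendsto_exp_neg_atTop_nhds_zero.comp h1
        refine this.congr fun T => ?_
        simp only [Function.comp_apply]
        ring_nf
      have := h2.const_mul (m * C^2)
      simpa using this
    exact squeeze_zero_norm' hnorm hto
  have h2 : Filter.Tendsto (fun T : ℝ => F T - 1) Filter.atTop (nhds (0 - 1)) :=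
    hFlim.sub_const 1
  have h1' : Filter.Tendsto (fun T : ℝ => F T - 1) Filter.atTop
      (nhds (∫ t in Set.Ioi (0:ℝ), (Γ * F t + F t * Γᵀ))) := by
    refine hIoi.congr fun T => heq T
  have hkey : ∫ t in Set.Ici (0:ℝ), (Γ * F t + F t * Γᵀ) = -1 := by
    rw [hIciIoi, tendsto_nhds_unique h1' h2, zero_sub]
  -- split the integral
  have hsplit : ∫ t in Set.Ici (0:ℝ), (Γ * F t + F t * Γᵀ) =
      Γ * (∫ t in Set.Ici (0:ℝ), F t) + (∫ t in Set.Ici (0:ℝ), F t) * Γᵀ := by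
    rw [integral_add hIntL hIntR]
    congr 1
    · have := L.integral_comp_comm hIntF
      exact this
    · have := R.integral_comp_comm hIntF
      exact this
  rw [← hsplit]
  exact hkey
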